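/- Let η be a real-valued homogeneous polynomial of degree m on ℝ² satisfying η Δη = |∇η|² on ℝ², with η not identically zero. Then m is even, m = 2j, and η(x,y) = a(x² + y²)^j for some real constant a. -/

import Mathlib

noncomputable section

section OneVariable
open Polynomial


lemma wronskian_zero_prop {f q : Polynomial ℝ} (hf : f ≠ 0)
    (h : f * derivative q = derivative f * q) : ∃ c : ℝ, q = Polynomial.C c * f := by
  classical
  rcases eq_or_ne q 0 with hq0 | hq0
  · exact ⟨0, by simp [hq0]⟩
  set g := GCDMonoid.gcd f q with hg
  have hgf : g ∣ f := gcd_dvd_left f q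
  have hgq : g ∣ q := gcd_dvd_right f q
  have hgne : g ≠ 0 := by
    intro h0
    exact hf ((gcd_eq_zero_iff f q).mp h0).1
  set f1 := f / g with hf1
  set q1 := q / g with hq1
  have hfe : g * f1 = f := EuclideanDomain.mul_div_cancel' hgne hgf
  have hqe : q = g * q1 := (EuclideanDomain.mul_div_cancel' hgne hgq).symm
  have hf1ne : f1 ≠ 0 := by
    intro h0; rw [h0, mul_zero] at hfe; exact hf hfe.symm
  have key : f1 * derivative q1 = derivative f1 * q1 := by
    have h2 : g * (g * (f1 * derivative q1)) = g * (g * (derivative f1 * q1)) := by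
      rw [← hfe, hqe] at h
      simp only [derivative_mul] at h
      linear_combination h
    exact mul_left_cancel₀ hgne (mul_left_cancel₀ hgne h2)
  have hcop : IsCoprime f1 q1 := _root_.isCoprime_div_gcd_div_gcd hq0
  have hdvd : f1 ∣ derivative f1 := by
    have : f1 ∣ derivative f1 * q1 := ⟨derivative q1, key.symm⟩
    exact hcop.dvd_of_dvd_mul_right this
  have hdf1 : derivative f1 = 0 := by
    by_contra hne
    have h1 := Polynomial.degree_le_of_dvd hdvd hne
    have h2 := Polynomial.degree_derivative_lt hf1ne
    exact absurd (h1.trans_lt h2) (lt_irrefl _)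
  have hdq1 : derivative q1 = 0 := by
    have := key
    rw [hdf1, zero_mul] at this
    exact (mul_eq_zero.mp this).resolve_left hf1ne
  obtain ⟨a, ha⟩ : ∃ a, f1 = Polynomial.C a := ⟨_, Polynomial.eq_C_of_derivative_eq_zero hdf1⟩
  obtain ⟨b, hb⟩ : ∃ b, q1 = Polynomial.C b := ⟨_, Polynomial.eq_C_of_derivative_eq_zero hdq1⟩
  have hane : a ≠ 0 := by
    intro h0; rw [h0, Polynomial.C_0] at ha; exact hf1ne ha
  refine ⟨b / a, ?_⟩
  rw [hqe, hb, ← hfe, ha, mul_comm (Polynomial.C (b/a)), mul_assoc, ← Polynomial.C_mul,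
    mul_comm a, div_mul_cancel₀ _ hane]


lemma ode_classify : ∀ (N : ℕ) (f : Polynomial ℝ), f.natDegree = N → f ≠ 0 →
    ∀ r c : ℝ, (1 + Polynomial.X ^ 2) * derivative f
        = (Polynomial.C c + Polynomial.C r * Polynomial.X) * f →
    ∃ (j : ℕ) (a : ℝ), f = Polynomial.C a * (1 + Polynomial.X ^ 2) ^ j ∧ r = 2 * j ∧ c = 0 := by
  intro N
  induction N using Nat.strong_induction_on with
  | _ N ih =>
    intro f hdeg hf r c hode
    rcases Nat.eq_zero_or_pos N with hN0 | hNpos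
    · -- constant case
      subst hN0
      obtain ⟨a, rfl⟩ : ∃ a, f = Polynomial.C a := ⟨_, Polynomial.eq_C_of_natDegree_eq_zero hdeg⟩
      have hane : a ≠ 0 := fun h0 => hf (by rw [h0, Polynomial.C_0])
      rw [derivative_C, mul_zero] at hode
      have h0 : (Polynomial.C c + Polynomial.C r * Polynomial.X : Polynomial ℝ) = 0 := by
        rcases mul_eq_zero.mp hode.symm with h | h
        · exact h
        · exact absurd h (by simpa using hane)
      have hc : c = 0 := by
        have := congrArg (fun p => Polynomial.coeff p 0) h0
        simpa using this
      have hr : r = 0 := by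
        have := congrArg (fun p => Polynomial.coeff p 1) h0
        simpa using this
      exact ⟨0, a, by simp, by simp [hr], hc⟩
    · -- nonconstant: find irreducible factor, show 1+X² divides f
      have hnu : ¬ IsUnit f := by
        intro hu
        have := Polynomial.natDegree_eq_zero_of_isUnit hu
        omega
      obtain ⟨ρ, hirr, hdvdf⟩ := WfDvdMonoid.exists_irreducible_factor hnu hf
      have hρprime : Prime ρ := hirr.prime
      have hρne : ρ ≠ 0 := hρprime.ne_zero
      have hρdeg : 0 < ρ.natDegree := by
        rcases Nat.eq_zero_or_pos ρ.natDegree with h0 | h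
        · obtain ⟨u, rfl⟩ : ∃ u, ρ = Polynomial.C u := ⟨_, Polynomial.eq_C_of_natDegree_eq_zero h0⟩
          exact absurd (Polynomial.isUnit_C.mpr (IsUnit.mk0 _ (by simpa using hρne))) hirr.not_isUnit
        · exact h
      -- extract maximal power
      have hfin : FiniteMultiplicity ρ f := FiniteMultiplicity.of_not_isUnit hirr.not_isUnit hf
      obtain ⟨h1, hfe, hnd⟩ := hfin.exists_eq_pow_mul_and_not_dvd
      have hkpos : 0 < multiplicity ρ f := by
        rcases Nat.eq_zero_or_pos (multiplicity ρ f) with h0 | h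
        · rw [h0, pow_zero, one_mul] at hfe
          exact absurd (hfe ▸ hdvdf) hnd
        · exact h
      have h1ne : h1 ≠ 0 := by
        intro h0; rw [h0, mul_zero] at hfe; exact hf hfe
      -- cancel ρ^(k-1) in the ODE
      obtain ⟨k', hk'⟩ : ∃ k', multiplicity ρ f = k' + 1 := ⟨multiplicity ρ f - 1, by omega⟩
      rw [hk'] at hfe
      have hcancel : (1 + Polynomial.X ^ 2) * (Polynomial.C ((k' : ℝ) + 1) * derivative ρ * h1
            + ρ * derivative h1)
          = (Polynomial.C c + Polynomial.C r * Polynomial.X) * (ρ * h1) := by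
        have expand : derivative (ρ ^ (k' + 1) * h1) = ρ ^ k' * (Polynomial.C ((k' : ℝ) + 1)
            * derivative ρ * h1 + ρ * derivative h1) := by
          simp only [derivative_mul, derivative_pow]
          push_cast
          ring
        rw [hfe, expand] at hode
        have := hode
        have hρk : (ρ : Polynomial ℝ) ^ k' ≠ 0 := pow_ne_zero _ hρne
        apply mul_left_cancel₀ hρk
        calc ρ ^ k' * ((1 + Polynomial.X ^ 2) * (Polynomial.C ((k' : ℝ) + 1) * derivative ρ * h1
              + ρ * derivative h1)) = (1 + Polynomial.X ^ 2) * (ρ ^ k' * (Polynomial.C ((k' : ℝ) + 1)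
              * derivative ρ * h1 + ρ * derivative h1)) := by ring
          _ = (Polynomial.C c + Polynomial.C r * Polynomial.X) * (ρ ^ (k' + 1) * h1) := this
          _ = ρ ^ k' * ((Polynomial.C c + Polynomial.C r * Polynomial.X) * (ρ * h1)) := by ring
      -- ρ divides (1+X²)·C(k)·ρ'·h1
      have hdvd2 : ρ ∣ (1 + Polynomial.X ^ 2) * (Polynomial.C ((k' : ℝ) + 1) * derivative ρ * h1) := by
        refine ⟨(Polynomial.C c + Polynomial.C r * Polynomial.X) * h1
          - (1 + Polynomial.X ^ 2) * derivative h1, ?_⟩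
        linear_combination hcancel
      have hρdvdsq : ρ ∣ (1 + Polynomial.X ^ 2 : Polynomial ℝ) := by
        rcases hρprime.dvd_mul.mp hdvd2 with h | h
        · exact h
        rcases hρprime.dvd_mul.mp h with h' | h'
        · rcases hρprime.dvd_mul.mp h' with h'' | h''
          · exfalso
            have hkne : ((k' : ℝ) + 1) ≠ 0 := by positivity
            have hCne : (Polynomial.C ((k' : ℝ) + 1) : Polynomial ℝ) ≠ 0 :=
              Polynomial.C_ne_zero.mpr hkne
            have h2 : ρ.degree ≤ 0 := by
              have := Polynomial.degree_le_of_dvd h'' hCne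
              rwa [Polynomial.degree_C hkne] at this
            have h3 : ρ.natDegree ≤ 0 := Polynomial.natDegree_le_iff_degree_le.mpr (by
              exact_mod_cast h2)
            omega
          · exfalso
            have hdρ : derivative ρ ≠ 0 := by
              intro h0
              have := Polynomial.natDegree_eq_zero_of_derivative_eq_zero h0
              omega
            have h1' := Polynomial.degree_le_of_dvd h'' hdρ
            have h2' := Polynomial.degree_derivative_lt hρne
            exact absurd (h1'.trans_lt h2') (lt_irrefl _)
        · exact absurd h' hnd
      -- hence (1+X²) ∣ f
      have hqne : (1 + Polynomial.X ^ 2 : Polynomial ℝ) ≠ 0 := by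
        intro h0
        have := congrArg (fun p => Polynomial.coeff p 0) h0
        simp at this
      have hnd12 : (1 + Polynomial.X ^ 2 : Polynomial ℝ).natDegree = 2 := by
        compute_degree!
      obtain ⟨s, hs⟩ := hρdvdsq
      have hsne : s ≠ 0 := by
        intro h0; rw [h0, mul_zero] at hs; exact hqne hs
      have hdegsum : ρ.natDegree + s.natDegree = 2 := by
        rw [← Polynomial.natDegree_mul hρne hsne, ← hs, hnd12]
      have hsqdvd : (1 + Polynomial.X ^ 2 : Polynomial ℝ) ∣ f := by
        rcases Nat.lt_or_ge ρ.natDegree 2 with hlt | hge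
        · -- natDegree ρ = 1 : real root contradiction
          exfalso
          have hρ1 : ρ.natDegree = 1 := by omega
          have hco : ρ.coeff 1 ≠ 0 := by
            intro h0
            exact hρne (Polynomial.leadingCoeff_eq_zero.mp
              (by rw [Polynomial.leadingCoeff, hρ1]; exact h0))
          set z := -(ρ.coeff 0) / ρ.coeff 1 with hz
          have hρz : Polynomial.eval z ρ = 0 := by
            conv_lhs => rw [Polynomial.eq_X_add_C_of_natDegree_le_one hρ1.le]
            simp only [Polynomial.eval_add, Polynomial.eval_mul, Polynomial.eval_C,
              Polynomial.eval_X, hz]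
            field_simp
            ring
          have : Polynomial.eval z (1 + Polynomial.X ^ 2 : Polynomial ℝ) = 0 := by
            rw [hs, Polynomial.eval_mul, hρz, zero_mul]
          simp only [Polynomial.eval_add, Polynomial.eval_one, Polynomial.eval_pow,
            Polynomial.eval_X] at this
          nlinarith [sq_nonneg z]
        · -- natDegree ρ = 2, s is a nonzero constant
          have hs0 : s.natDegree = 0 := by omega
          obtain ⟨u, rfl⟩ : ∃ u, s = Polynomial.C u := ⟨_, Polynomial.eq_C_of_natDegree_eq_zero hs0⟩
          have hune : u ≠ 0 := by
            intro h0; rw [h0, Polynomial.C_0] at hsne; exact hsne rfl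
          obtain ⟨t, ht⟩ := hdvdf
          refine ⟨Polynomial.C u⁻¹ * t, ?_⟩
          rw [hs, ht]
          have : (Polynomial.C u * Polynomial.C u⁻¹ : Polynomial ℝ) = 1 := by
            rw [← Polynomial.C_mul, mul_inv_cancel₀ hune, Polynomial.C_1]
          calc ρ * t = (ρ * (Polynomial.C u * Polynomial.C u⁻¹)) * t := by rw [this, mul_one]
            _ = ρ * Polynomial.C u * (Polynomial.C u⁻¹ * t) := by ring
      obtain ⟨g, hfg⟩ := hsqdvd
      have hgne : g ≠ 0 := by
        intro h0; rw [h0, mul_zero] at hfg; exact hf hfg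
      -- the quotient satisfies the ODE with r-2
      have hgode : (1 + Polynomial.X ^ 2) * derivative g
          = (Polynomial.C c + Polynomial.C (r - 2) * Polynomial.X) * g := by
        apply mul_left_cancel₀ hqne
        have hode' := hode
        rw [hfg] at hode'
        have hder : derivative ((1 + Polynomial.X ^ 2) * g)
            = 2 * Polynomial.X * g + (1 + Polynomial.X ^ 2) * derivative g := by
          simp only [derivative_mul, derivative_add, derivative_one, derivative_X_pow,
            Nat.cast_ofNat, map_ofNat]
          ring
        rw [hder] at hode'
        have hC2 : (Polynomial.C (r - 2) : Polynomial ℝ) = Polynomial.C r - 2 := by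
          rw [map_sub, map_ofNat]
        rw [hC2]
        linear_combination hode'
      have hgdeg : g.natDegree = N - 2 := by
        have : f.natDegree = 2 + g.natDegree := by
          rw [hfg, Polynomial.natDegree_mul hqne hgne, hnd12]
        omega
      have hNge2 : 2 ≤ N := by
        have : f.natDegree = 2 + g.natDegree := by
          rw [hfg, Polynomial.natDegree_mul hqne hgne, hnd12]
        omega
      obtain ⟨j, a, hgf, hr2, hc0⟩ :=
        ih (N - 2) (by omega) g hgdeg hgne (r - 2) c hgode
      refine ⟨j + 1, a, ?_, ?_, hc0⟩
      · rw [hfg, hgf]; ring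
      · push_cast; linarith


end OneVariable


/-- evaluation at (X, 1) -/
def toOne : MvPolynomial (Fin 2) ℝ →ₐ[ℝ] Polynomial ℝ :=
  MvPolynomial.aeval ![Polynomial.X, 1]

lemma fin2_degree (d : Fin 2 →₀ ℕ) : d.degree = d 0 + d 1 := by
  rw [Finsupp.degree_apply]
  rw [Finset.sum_subset (Finset.subset_univ d.support)]
  · exact Fin.sum_univ_two d
  · intro x _ hx
    simpa using Finsupp.notMem_support_iff.mp hx

lemma toOne_monomial (d : Fin 2 →₀ ℕ) (a : ℝ) :
    toOne (MvPolynomial.monomial d a) = Polynomial.C a * Polynomial.X ^ (d 0) := by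
  rw [toOne, MvPolynomial.aeval_monomial]
  rw [Finsupp.prod_fintype _ _ (fun i => pow_zero _), Fin.prod_univ_two]
  simp [Polynomial.C_eq_algebraMap]

lemma toOne_pderiv0 (p : MvPolynomial (Fin 2) ℝ) :
    Polynomial.derivative (toOne p) = toOne (MvPolynomial.pderiv 0 p) := by
  induction p using MvPolynomial.induction_on with
  | C a => simp [toOne]
  | add p q hp hq => simp only [map_add, hp, hq]
  | mul_X p i hp =>
    rw [map_mul, Polynomial.derivative_mul, hp, MvPolynomial.pderiv_mul, map_add, map_mul, map_mul]
    fin_cases i <;>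
      simp [toOne, MvPolynomial.pderiv_X, Pi.single_apply]

open MvPolynomial in
lemma euler_monomial (n : ℕ) (d : Fin 2 →₀ ℕ) (a : ℝ) (hd : d 0 + d 1 = n) :
    X 0 * pderiv 0 (monomial d a) + X 1 * pderiv 1 (monomial d a)
      = C (n : ℝ) * monomial d a := by
  have key : ∀ i : Fin 2, X i * pderiv i (monomial d a) = monomial d ((d i : ℝ) * a) := by
    intro i
    rw [pderiv_monomial]
    rcases Nat.eq_zero_or_pos (d i) with h0 | hpos
    · simp [h0]
    · have hX : (X i : MvPolynomial (Fin 2) ℝ) = monomial (Finsupp.single i 1) 1 := rfl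
      rw [hX, monomial_mul]
      have hsum : Finsupp.single i 1 + (d - Finsupp.single i 1) = d := by
        ext j
        rcases eq_or_ne j i with rfl | hne
        · simp only [Finsupp.add_apply, Finsupp.single_eq_same, Finsupp.tsub_apply]
          omega
        · simp [Finsupp.single_eq_of_ne' (Ne.symm hne)]
      rw [hsum, one_mul, mul_comm]
  rw [key 0, key 1, ← map_add, C_mul_monomial]
  congr 1
  push_cast [← hd]
  ring


open MvPolynomial in
lemma euler2 {p : MvPolynomial (Fin 2) ℝ} {n : ℕ} (h : p.IsHomogeneous n) :
    X 0 * pderiv 0 p + X 1 * pderiv 1 p = C (n : ℝ) * p := by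
  conv_lhs => rw [p.as_sum]
  conv_rhs => rw [p.as_sum]
  rw [map_sum, map_sum, Finset.mul_sum, Finset.mul_sum, Finset.mul_sum, ← Finset.sum_add_distrib]
  apply Finset.sum_congr rfl
  intro d hd
  apply euler_monomial
  rw [← fin2_degree, Finsupp.degree_eq_weight_one]
  exact h (MvPolynomial.mem_support_iff.mp hd)

open MvPolynomial in
lemma fin2_finsupp_ext {d e : Fin 2 →₀ ℕ} (h0 : d 0 = e 0) (h1 : d 1 = e 1) : d = e := by
  ext j
  fin_cases j
  · exact h0
  · exact h1

open MvPolynomial in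
lemma toOne_eq_zero {p : MvPolynomial (Fin 2) ℝ} {n : ℕ} (h : p.IsHomogeneous n)
    (h0 : toOne p = 0) : p = 0 := by
  have hdeg : ∀ d ∈ p.support, d 0 + d 1 = n := by
    intro d hd
    rw [← fin2_degree, Finsupp.degree_eq_weight_one]
    exact h (MvPolynomial.mem_support_iff.mp hd)
  have hrep : toOne p = ∑ e ∈ p.support, Polynomial.C (coeff e p) * Polynomial.X ^ (e 0) := by
    conv_lhs => rw [p.as_sum]
    rw [map_sum]
    exact Finset.sum_congr rfl fun e _ => toOne_monomial e _
  by_contra hne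
  obtain ⟨d, hd⟩ := (MvPolynomial.support_nonempty.mpr hne)
  have hco : (toOne p).coeff (d 0) = coeff d p := by
    rw [hrep, Polynomial.finset_sum_coeff]
    rw [Finset.sum_eq_single_of_mem d hd]
    · simp
    · intro e he hedne
      have : e 0 ≠ d 0 := by
        intro heq
        apply hedne
        apply fin2_finsupp_ext heq
        have h1 := hdeg d hd
        have h2 := hdeg e he
        omega
      rw [Polynomial.coeff_C_mul, Polynomial.coeff_X_pow, if_neg (Ne.symm this), mul_zero]
  rw [h0] at hco
  simp only [Polynomial.coeff_zero] at hco
  exact (MvPolynomial.mem_support_iff.mp hd) hco.symm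

open MvPolynomial in
lemma isHomog_pderiv {p : MvPolynomial (Fin 2) ℝ} {n : ℕ} (h : p.IsHomogeneous (n + 1))
    (i : Fin 2) : (pderiv i p).IsHomogeneous n := by
  have hdeg : ∀ d ∈ p.support, d 0 + d 1 = n + 1 := by
    intro d hd
    rw [← fin2_degree, Finsupp.degree_eq_weight_one]
    exact h (MvPolynomial.mem_support_iff.mp hd)
  conv_lhs => rw [p.as_sum]
  rw [map_sum]
  apply MvPolynomial.IsHomogeneous.sum
  intro d hd
  rw [pderiv_monomial]
  rcases Nat.eq_zero_or_pos (d i) with h0 | hpos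
  · rw [h0]
    norm_num
    exact isHomogeneous_zero _ _ _
  · apply isHomogeneous_monomial
    rw [fin2_degree]
    have hsum := hdeg d hd
    have hi : i = 0 ∨ i = 1 := by fin_cases i; exacts [Or.inl rfl, Or.inr rfl]
    rcases hi with rfl | rfl <;>
      · simp only [Finsupp.tsub_apply, Finsupp.single_apply]
        norm_num
        omega


open MvPolynomial

/-- A nonzero real-valued homogeneous polynomial η of degree m on ℝ² satisfying
    η Δη = |∇η|² has even degree m = 2j and equals a(x² + y²)^j. -/
theorem homogeneous_real_bilinear_laplace_classification
    (m : ℕ) (η : MvPolynomial (Fin 2) ℝ)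
    (hhom : η.IsHomogeneous m) (hne : η ≠ 0)
    (heq : η * (pderiv 0 (pderiv 0 η) + pderiv 1 (pderiv 1 η))
            = (pderiv 0 η)^2 + (pderiv 1 η)^2) :
    ∃ (j : ℕ) (a : ℝ), m = 2 * j ∧ η = C a * (X 0 ^ 2 + X 1 ^ 2) ^ j := by
  cases m with
  | zero =>
    -- η is a constant
    refine ⟨0, coeff 0 η, rfl, ?_⟩
    have hsupp : ∀ d ∈ η.support, d = (0 : Fin 2 →₀ ℕ) := by
      intro d hd
      have := (MvPolynomial.totalDegree_eq_zero_iff _ η).mp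
        ((totalDegree_zero_iff_isHomogeneous _).mpr hhom) d hd
      ext x
      simp [this x]
    rw [pow_zero, mul_one]
    apply MvPolynomial.ext
    intro d
    rw [MvPolynomial.coeff_C]
    rcases eq_or_ne (0 : Fin 2 →₀ ℕ) d with rfl | hne0
    · rw [if_pos rfl]
    · rw [if_neg hne0]
      by_contra hc
      exact hne0 ((hsupp d (MvPolynomial.mem_support_iff.mpr hc)).symm)
  | succ n =>
    set f : Polynomial ℝ := toOne η with hfdef
    set f' := Polynomial.derivative f with hf'def
    set f'' := Polynomial.derivative f' with hf''def
    have hfne : f ≠ 0 := fun h => hne (toOne_eq_zero hhom h)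
    have hXz : toOne (X 0) = Polynomial.X := by simp [toOne]
    have hXo : toOne (X 1) = 1 := by simp [toOne]
    have hCr : ∀ r : ℝ, toOne (C r) = Polynomial.C r := by
      intro r; simp [toOne, Polynomial.C_eq_algebraMap]
    have hp0 : toOne (pderiv 0 η) = f' := (toOne_pderiv0 η).symm
    -- Euler for η
    have he1 := congrArg toOne (euler2 hhom)
    simp only [map_add, map_mul, hXz, hXo, one_mul, hCr] at he1
    rw [hp0, ← hfdef] at he1
    set g1 := toOne (pderiv 1 η) with hg1def
    have hg1 : g1 = Polynomial.C ((n : ℝ) + 1) * f - Polynomial.X * f' := by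
      push_cast at he1
      linear_combination he1
    -- Euler for pderiv 1 η
    have hph : (pderiv 1 η).IsHomogeneous n := isHomog_pderiv hhom 1
    have he2 := congrArg toOne (euler2 hph)
    simp only [map_add, map_mul, hXz, hXo, one_mul, hCr, ← toOne_pderiv0] at he2
    rw [← hg1def] at he2
    -- he2 : X * derivative g1 + toOne (pderiv 1 (pderiv 1 η)) = C n * g1
    have hdg1 : Polynomial.derivative g1
        = Polynomial.C ((n : ℝ) + 1) * f' - (f' + Polynomial.X * f'') := by
      rw [hg1]
      simp only [Polynomial.derivative_sub, Polynomial.derivative_mul, Polynomial.derivative_C,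
        Polynomial.derivative_X, ← hf'def, ← hf''def]
      ring
    -- main functional equation
    have heq' := congrArg toOne heq
    simp only [map_mul, map_add, map_pow, ← toOne_pderiv0] at heq'
    rw [← hfdef, ← hf'def, ← hf''def, ← hg1def] at heq'
    -- heq' : f * (derivative f' + toOne(∂1∂1η)) = f'^2 + g1^2
    -- he2 : X * derivative g1 + toOne(∂1∂1η) = C n * g1
    have hE : (1 + Polynomial.X ^ 2) * (f * f'' - f' ^ 2) + 2 * Polynomial.X * f * f'
        = Polynomial.C ((n : ℝ) + 1) * f ^ 2 := by
      have hsub : toOne (pderiv 1 (pderiv 1 η))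
          = Polynomial.C ((n : ℝ)) * g1 - Polynomial.X * Polynomial.derivative g1 := by
        linear_combination he2
      rw [hsub, hdg1, hg1] at heq'
      have hCn1 : Polynomial.C ((n : ℝ) + 1) = Polynomial.C ((n : ℝ)) + 1 := by
        rw [map_add, map_one]
      rw [hCn1] at heq' ⊢
      linear_combination heq'
    -- wronskian
    set Q : Polynomial ℝ := (1 + Polynomial.X ^ 2) * f'
      - Polynomial.C ((n : ℝ) + 1) * Polynomial.X * f with hQdef
    have hdQ : Polynomial.derivative Q = 2 * Polynomial.X * f' + (1 + Polynomial.X ^ 2) * f''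
        - Polynomial.C ((n : ℝ) + 1) * f - Polynomial.C ((n : ℝ) + 1) * Polynomial.X * f' := by
      rw [hQdef]
      simp only [Polynomial.derivative_sub, Polynomial.derivative_mul, Polynomial.derivative_add,
        Polynomial.derivative_one, Polynomial.derivative_C, Polynomial.derivative_X,
        Polynomial.derivative_X_pow, ← hf'def, ← hf''def, Nat.cast_ofNat, map_ofNat]
      ring
    have hW : f * Polynomial.derivative Q = Polynomial.derivative f * Q := by
      rw [hdQ, hQdef, ← hf'def]
      linear_combination hE
    obtain ⟨q, hq⟩ := wronskian_zero_prop hfne hW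
    have hode : (1 + Polynomial.X ^ 2) * Polynomial.derivative f
        = (Polynomial.C q + Polynomial.C ((n : ℝ) + 1) * Polynomial.X) * f := by
      rw [← hf'def]
      linear_combination hq
    obtain ⟨j, a, hfa, hrj, _⟩ := ode_classify f.natDegree f rfl hfne ((n : ℝ) + 1) q hode
    have hmj : n + 1 = 2 * j := by
      have : ((n + 1 : ℕ) : ℝ) = ((2 * j : ℕ) : ℝ) := by push_cast; linarith
      exact_mod_cast this
    refine ⟨j, a, hmj, ?_⟩
    -- reconstruct η
    set ζ : MvPolynomial (Fin 2) ℝ := C a * (X 0 ^ 2 + X 1 ^ 2) ^ j with hζdef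
    have hζhom : ζ.IsHomogeneous (n + 1) := by
      have h2 : (X 0 ^ 2 + X 1 ^ 2 : MvPolynomial (Fin 2) ℝ).IsHomogeneous 2 := by
        have ha := (isHomogeneous_X ℝ (0 : Fin 2)).pow 2
        have hb := (isHomogeneous_X ℝ (1 : Fin 2)).pow 2
        rw [one_mul] at ha hb
        exact ha.add hb
      have h3 := h2.pow j
      rw [← hmj] at h3
      exact h3.C_mul a
    have hζone : toOne ζ = f := by
      rw [hζdef, map_mul, map_pow, map_add, map_pow, map_pow, hXz, hXo, hCr, hfa]
      ring
    have hdiff : η - ζ = 0 := by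
      apply toOne_eq_zero (hhom.sub hζhom)
      rw [map_sub, hζone, ← hfdef, sub_self]
    have := sub_eq_zero.mp hdiff
    rw [hζdef] at this
    exact this


end
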